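/- Let f ∈ ℝ and Z₀ = (0,0,−1) ∈ H_S. Suppose q̃ = (x̃,ỹ) : I → D is a C² curve satisfying the planar Hooke equation d²q̃/dt² = 2f · q̃ (which is the equation of motion of the Hooke problem with force function f(‖q̃‖ₐ⁻)² for every a ∈ (−1,1)). Let τ ↦ t(τ) solve dt/dτ = 1 − x̃(t)² − ỹ(t)² and set q(τ) := π_H(q̃(t(τ))). Then for every τ, q''(τ) + η(q''(τ), q(τ)) q(τ) = 2f · η(q(τ),Z₀)^{−3} · (Z₀ + η(q(τ),Z₀) q(τ)); i.e., the central projection carries solutions of the planar Hooke problem to solutions of the hyperbolic Hooke problem with force function f tanh² θ_{Z₀}. -/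

import Mathlib

noncomputable section

/-- The Minkowski form `η(u,v) = u₁v₁ + u₂v₂ - u₃v₃` on `ℝ³ = ℝ × ℝ × ℝ`. -/
def eta (u v : ℝ × ℝ × ℝ) : ℝ := u.1 * v.1 + u.2.1 * v.2.1 - u.2.2 * v.2.2

/-- Central projection from the unit disc in the plane `{z = -1}` onto the lower
sheet of the hyperboloid `η(q,q) = -1`. -/
def centralProjH (p : ℝ × ℝ) : ℝ × ℝ × ℝ :=
  (Real.sqrt (1 - p.1 ^ 2 - p.2 ^ 2))⁻¹ • (p.1, p.2, (-1 : ℝ))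

/-- The central projection carries solutions of the planar Hooke problem (with
force function `f(‖·‖ₐ⁻)²` for every `a ∈ (-1,1)`) to solutions of the
hyperbolic Hooke problem with force function `f tanh² θ_{Z₀}`. -/
private lemma hdFst {F : ℝ → ℝ × ℝ} {v : ℝ × ℝ} {x : ℝ}
    (h : HasDerivAt F v x) : HasDerivAt (fun s => (F s).1) v.1 x := by
  simpa using h.hasFDerivAt.fst.hasDerivAt

private lemma hdSnd {F : ℝ → ℝ × ℝ} {v : ℝ × ℝ} {x : ℝ}
    (h : HasDerivAt F v x) : HasDerivAt (fun s => (F s).2) v.2 x := by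
  simpa using h.hasFDerivAt.snd.hasDerivAt

private lemma aux2 (f : ℝ) (X Y A B S : ℝ → ℝ)
    (hS0 : ∀ σ, S σ ≠ 0)
    (hS2 : ∀ σ, S σ ^ 2 = 1 - X σ ^ 2 - Y σ ^ 2)
    (hX : ∀ σ, HasDerivAt X (S σ ^ 2 * A σ) σ)
    (hY : ∀ σ, HasDerivAt Y (S σ ^ 2 * B σ) σ)
    (hA : ∀ σ, HasDerivAt A (S σ ^ 2 * (2 * f * X σ)) σ)
    (hB : ∀ σ, HasDerivAt B (S σ ^ 2 * (2 * f * Y σ)) σ)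
    (hSd : ∀ σ, HasDerivAt S (-((X σ * A σ + Y σ * B σ) * S σ)) σ)
    (q : ℝ → ℝ × ℝ × ℝ)
    (hq : q = fun σ => (X σ / S σ, Y σ / S σ, -(1 / S σ)))
    (τ : ℝ) :
    deriv (deriv q) τ + eta (deriv (deriv q) τ) (q τ) • q τ
      = (2 * f / (eta (q τ) ((0:ℝ), (0:ℝ), (-1:ℝ))) ^ 3) •
        (((0:ℝ), (0:ℝ), (-1:ℝ)) + eta (q τ) ((0:ℝ), (0:ℝ), (-1:ℝ)) • q τ) := by
  -- first derivative, as a function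
  have hD1 : ∀ σ, HasDerivAt (fun σ => X σ / S σ)
      ((S σ ^ 2 * A σ + (X σ * A σ + Y σ * B σ) * X σ) / S σ) σ := by
    intro σ
    have h := (hX σ).div (hSd σ) (hS0 σ)
    refine h.congr_deriv ?_
    field_simp [hS0 _]
    ring
  have hD2 : ∀ σ, HasDerivAt (fun σ => Y σ / S σ)
      ((S σ ^ 2 * B σ + (X σ * A σ + Y σ * B σ) * Y σ) / S σ) σ := by
    intro σ
    have h := (hY σ).div (hSd σ) (hS0 σ)
    refine h.congr_deriv ?_
    field_simp [hS0 _]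
    ring
  have hD3 : ∀ σ, HasDerivAt (fun σ => -(1 / S σ))
      (-((X σ * A σ + Y σ * B σ) / S σ)) σ := by
    intro σ
    have h := ((hasDerivAt_const σ (1:ℝ)).div (hSd σ) (hS0 σ)).neg
    refine h.congr_deriv ?_
    field_simp [hS0 _]
    ring
  have hDq : ∀ σ, HasDerivAt q
      (((S σ ^ 2 * A σ + (X σ * A σ + Y σ * B σ) * X σ) / S σ,
        (S σ ^ 2 * B σ + (X σ * A σ + Y σ * B σ) * Y σ) / S σ,
        -((X σ * A σ + Y σ * B σ) / S σ))) σ := by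
    intro σ
    rw [hq]
    exact (hD1 σ).prodMk ((hD2 σ).prodMk (hD3 σ))
  have hderiv : deriv q = fun σ =>
      ((S σ ^ 2 * A σ + (X σ * A σ + Y σ * B σ) * X σ) / S σ,
       (S σ ^ 2 * B σ + (X σ * A σ + Y σ * B σ) * Y σ) / S σ,
       -((X σ * A σ + Y σ * B σ) / S σ)) := funext fun σ => (hDq σ).deriv
  -- second derivative at τ
  have he' : HasDerivAt (fun σ => X σ * A σ + Y σ * B σ)
      (S τ ^ 2 * A τ * A τ + X τ * (S τ ^ 2 * (2 * f * X τ)) +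
        (S τ ^ 2 * B τ * B τ + Y τ * (S τ ^ 2 * (2 * f * Y τ)))) τ :=
    ((hX τ).mul (hA τ)).add ((hY τ).mul (hB τ))
  have hSq : HasDerivAt (fun σ => S σ ^ 2)
      ((2:ℕ) * S τ ^ (2 - 1) * -((X τ * A τ + Y τ * B τ) * S τ)) τ := (hSd τ).pow 2
  have hE1 : HasDerivAt
      (fun σ => (S σ ^ 2 * A σ + (X σ * A σ + Y σ * B σ) * X σ) / S σ)
      (X τ * ((X τ * A τ + Y τ * B τ) ^ 2 + S τ ^ 2 * (A τ ^ 2 + B τ ^ 2)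
         + 2 * f * S τ ^ 2 * (X τ ^ 2 + Y τ ^ 2 + S τ ^ 2)) / S τ) τ := by
    have h := ((hSq.mul (hA τ)).add (he'.mul (hX τ))).div (hSd τ) (hS0 τ)
    refine h.congr_deriv ?_
    simp only [Pi.mul_apply, Pi.add_apply]
    field_simp [hS0 _]
    ring
  have hE2 : HasDerivAt
      (fun σ => (S σ ^ 2 * B σ + (X σ * A σ + Y σ * B σ) * Y σ) / S σ)
      (Y τ * ((X τ * A τ + Y τ * B τ) ^ 2 + S τ ^ 2 * (A τ ^ 2 + B τ ^ 2)
         + 2 * f * S τ ^ 2 * (X τ ^ 2 + Y τ ^ 2 + S τ ^ 2)) / S τ) τ := by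
    have h := ((hSq.mul (hB τ)).add (he'.mul (hY τ))).div (hSd τ) (hS0 τ)
    refine h.congr_deriv ?_
    simp only [Pi.mul_apply, Pi.add_apply]
    field_simp [hS0 _]
    ring
  have hE3 : HasDerivAt
      (fun σ => -((X σ * A σ + Y σ * B σ) / S σ))
      (-(((X τ * A τ + Y τ * B τ) ^ 2 + S τ ^ 2 * (A τ ^ 2 + B τ ^ 2)
         + 2 * f * S τ ^ 2 * (X τ ^ 2 + Y τ ^ 2)) / S τ)) τ := by
    have h := (he'.div (hSd τ) (hS0 τ)).neg
    refine h.congr_deriv ?_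
    field_simp [hS0 _]
    ring
  have h2d : deriv (deriv q) τ =
      (X τ * ((X τ * A τ + Y τ * B τ) ^ 2 + S τ ^ 2 * (A τ ^ 2 + B τ ^ 2)
         + 2 * f * S τ ^ 2 * (X τ ^ 2 + Y τ ^ 2 + S τ ^ 2)) / S τ,
       Y τ * ((X τ * A τ + Y τ * B τ) ^ 2 + S τ ^ 2 * (A τ ^ 2 + B τ ^ 2)
         + 2 * f * S τ ^ 2 * (X τ ^ 2 + Y τ ^ 2 + S τ ^ 2)) / S τ,
       -(((X τ * A τ + Y τ * B τ) ^ 2 + S τ ^ 2 * (A τ ^ 2 + B τ ^ 2)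
         + 2 * f * S τ ^ 2 * (X τ ^ 2 + Y τ ^ 2)) / S τ)) := by
    have hh : HasDerivAt (deriv q)
        (X τ * ((X τ * A τ + Y τ * B τ) ^ 2 + S τ ^ 2 * (A τ ^ 2 + B τ ^ 2)
           + 2 * f * S τ ^ 2 * (X τ ^ 2 + Y τ ^ 2 + S τ ^ 2)) / S τ,
         Y τ * ((X τ * A τ + Y τ * B τ) ^ 2 + S τ ^ 2 * (A τ ^ 2 + B τ ^ 2)
           + 2 * f * S τ ^ 2 * (X τ ^ 2 + Y τ ^ 2 + S τ ^ 2)) / S τ,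
         -(((X τ * A τ + Y τ * B τ) ^ 2 + S τ ^ 2 * (A τ ^ 2 + B τ ^ 2)
           + 2 * f * S τ ^ 2 * (X τ ^ 2 + Y τ ^ 2)) / S τ)) τ := by
      rw [hderiv]
      exact hE1.prodMk (hE2.prodMk hE3)
    exact hh.deriv
  rw [h2d, hq]
  simp only [eta, Prod.smul_def, smul_eq_mul, Prod.mk_add_mk, Prod.mk.injEq]
  refine ⟨?_, ?_, ?_⟩
  · field_simp [hS0 τ]
    linear_combination (-(X τ * ((X τ * A τ + Y τ * B τ) ^ 2 + S τ ^ 2 * (A τ ^ 2 + B τ ^ 2) + 2 * f * S τ ^ 2 * (X τ ^ 2 + Y τ ^ 2 + S τ ^ 2)))) * hS2 τ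
  · field_simp [hS0 τ]
    linear_combination (-(Y τ * ((X τ * A τ + Y τ * B τ) ^ 2 + S τ ^ 2 * (A τ ^ 2 + B τ ^ 2) + 2 * f * S τ ^ 2 * (X τ ^ 2 + Y τ ^ 2 + S τ ^ 2)))) * hS2 τ
  · field_simp [hS0 τ]
    linear_combination (((X τ * A τ + Y τ * B τ) ^ 2 + S τ ^ 2 * (A τ ^ 2 + B τ ^ 2) + 2 * f * S τ ^ 2 * (X τ ^ 2 + Y τ ^ 2 + S τ ^ 2))) * hS2 τ

theorem hooke_central_projection_hyperbolic
    (f : ℝ)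
    (Z0 : ℝ × ℝ × ℝ) (hZ0 : Z0 = ((0 : ℝ), (0 : ℝ), (-1 : ℝ)))
    (qt : ℝ → ℝ × ℝ)
    (hdisc : ∀ s, (qt s).1 ^ 2 + (qt s).2 ^ 2 < 1)
    (hC2 : ContDiff ℝ 2 qt)
    (hODE : ∀ s, deriv (deriv qt) s = (2 * f) • qt s)
    (t : ℝ → ℝ)
    (ht : ∀ τ, HasDerivAt t (1 - (qt (t τ)).1 ^ 2 - (qt (t τ)).2 ^ 2) τ)
    (q : ℝ → ℝ × ℝ × ℝ) (hq : q = fun τ => centralProjH (qt (t τ))) :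
    ∀ τ, deriv (deriv q) τ + eta (deriv (deriv q) τ) (q τ) • q τ
      = (2 * f / (eta (q τ) Z0) ^ 3) • (Z0 + eta (q τ) Z0 • q τ) := by
  subst hZ0
  intro τ
  have hqt1 : Differentiable ℝ qt := hC2.differentiable (by norm_num)
  have hqt2 : Differentiable ℝ (deriv qt) := by
    have h := (contDiff_succ_iff_deriv (n := 1)).mp (by exact_mod_cast hC2)
    exact h.2.2.differentiable (by norm_num)
  set X : ℝ → ℝ := fun σ => (qt (t σ)).1 with hXdef
  set Y : ℝ → ℝ := fun σ => (qt (t σ)).2 with hYdef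
  set A : ℝ → ℝ := fun σ => (deriv qt (t σ)).1 with hAdef
  set B : ℝ → ℝ := fun σ => (deriv qt (t σ)).2 with hBdef
  set S : ℝ → ℝ := fun σ => Real.sqrt (1 - X σ ^ 2 - Y σ ^ 2) with hSdef
  have hpos : ∀ σ, (0:ℝ) < 1 - X σ ^ 2 - Y σ ^ 2 := fun σ => by
    have := hdisc (t σ); simp only [hXdef, hYdef]; linarith
  have hS2 : ∀ σ, S σ ^ 2 = 1 - X σ ^ 2 - Y σ ^ 2 := fun σ =>
    Real.sq_sqrt (hpos σ).le
  have hS0 : ∀ σ, S σ ≠ 0 := fun σ => (Real.sqrt_pos.mpr (hpos σ)).ne'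
  have hSS : ∀ σ, Real.sqrt (1 - X σ ^ 2 - Y σ ^ 2) = S σ := fun σ => rfl
  have hcomp : ∀ σ, HasDerivAt (fun σ => qt (t σ))
      ((1 - X σ ^ 2 - Y σ ^ 2) • deriv qt (t σ)) σ := fun σ =>
    ((hqt1 (t σ)).hasDerivAt).scomp σ (ht σ)
  have hXd : ∀ σ, HasDerivAt X (S σ ^ 2 * A σ) σ := fun σ => by
    rw [hS2 σ]
    exact hdFst (hcomp σ)
  have hYd : ∀ σ, HasDerivAt Y (S σ ^ 2 * B σ) σ := fun σ => by
    rw [hS2 σ]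
    exact hdSnd (hcomp σ)
  have hcomp2 : ∀ σ, HasDerivAt (fun σ => deriv qt (t σ))
      ((1 - X σ ^ 2 - Y σ ^ 2) • ((2 * f) • qt (t σ))) σ := fun σ => by
    have h0 := (hqt2 (t σ)).hasDerivAt
    rw [hODE (t σ)] at h0
    exact h0.scomp σ (ht σ)
  have hAd : ∀ σ, HasDerivAt A (S σ ^ 2 * (2 * f * X σ)) σ := fun σ => by
    rw [hS2 σ]
    exact hdFst (hcomp2 σ)
  have hBd : ∀ σ, HasDerivAt B (S σ ^ 2 * (2 * f * Y σ)) σ := fun σ => by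
    rw [hS2 σ]
    exact hdSnd (hcomp2 σ)
  have hSd : ∀ σ, HasDerivAt S (-((X σ * A σ + Y σ * B σ) * S σ)) σ := fun σ => by
    have hw : HasDerivAt (fun σ => 1 - X σ ^ 2 - Y σ ^ 2)
        (0 - 2 * X σ ^ 1 * (S σ ^ 2 * A σ) - 2 * Y σ ^ 1 * (S σ ^ 2 * B σ)) σ :=
      ((hasDerivAt_const σ (1:ℝ)).sub ((hXd σ).pow 2)).sub ((hYd σ).pow 2)
    have h := (Real.hasDerivAt_sqrt (hpos σ).ne').comp σ hw
    refine h.congr_deriv ?_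
    rw [hSS σ]
    field_simp [hS0 σ]
    ring
  have hq' : q = fun σ => (X σ / S σ, Y σ / S σ, -(1 / S σ)) := by
    rw [hq]
    funext σ
    simp only [centralProjH, Prod.smul_def, smul_eq_mul, hXdef, hYdef, hSdef]
    refine Prod.ext ?_ (Prod.ext ?_ ?_) <;> simp <;> ring
  exact aux2 f X Y A B S hS0 hS2 hXd hYd hAd hBd hSd q hq' τ
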